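/- For any infinitely divisible law π on ℝ there exists a stationary trawl process having π as its one-dimensional marginal law: choose a trawl A with Leb(A) = 1 and a homogeneous Lévy basis L whose Lévy seed has law π; then Y_t = L(A_t) satisfies Y_t ∼ π for every t. -/

import Mathlib

open MeasureTheory

set_option maxHeartbeats 1000000

open MeasureTheory

section AuxChar
open Real SchwartzMap
open scoped FourierTransform

noncomputable def mySchwartz (f : ℝ → ℂ) (h1 : ContDiff ℝ ((⊤ : ℕ∞)) f) (h2 : HasCompactSupport f) :
    SchwartzMap ℝ ℂ where
  toFun := f
  smooth' := h1
  decay' := by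
    intro k n
    have hc : Continuous fun x : ℝ => ‖x‖ ^ k * ‖iteratedFDeriv ℝ n f x‖ :=
      ((continuous_norm.pow k)).mul (h1.continuous_iteratedFDeriv (by exact_mod_cast le_top)).norm
    have hs : HasCompactSupport fun x : ℝ => ‖x‖ ^ k * ‖iteratedFDeriv ℝ n f x‖ :=
      ((h2.iteratedFDeriv n).norm).mul_left
    obtain ⟨C, hC⟩ := hc.bounded_above_of_compact_support hs
    exact ⟨C, fun x => by simpa [abs_of_nonneg, norm_mul] using hC x⟩

@[simp] lemma mySchwartz_apply (f : ℝ → ℂ) (h1 : ContDiff ℝ ((⊤ : ℕ∞)) f) (h2 : HasCompactSupport f)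
    (x : ℝ) : mySchwartz f h1 h2 x = f x := rfl

lemma key_parseval (μ : Measure ℝ) [IsProbabilityMeasure μ] (h : ℝ → ℂ)
    (hh : Integrable h) :
    ∫ ξ, 𝓕 h ξ ∂μ
      = ∫ x, h x * (∫ ξ, Complex.exp (Complex.I * (-(2 * π * x)) * ξ) ∂μ) := by
  have hL : Continuous fun p : ℝ × ℝ => innerₗ ℝ p.1 p.2 := by
    simpa using continuous_inner (𝕜 := ℝ) (E := ℝ)
  have H := VectorFourier.integral_fourierIntegral_smul_eq_flip (F := ℂ)
    (μ := (volume : Measure ℝ)) (ν := μ) (L := innerₗ ℝ)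
    Real.continuous_fourierChar hL hh (integrable_const (1 : ℂ))
  simp only [smul_eq_mul, mul_one] at H
  rw [show (fun ξ => VectorFourier.fourierIntegral Real.fourierChar volume (innerₗ ℝ) h ξ)
      = 𝓕 h from rfl] at H
  rw [H]
  refine integral_congr_ae (Filter.Eventually.of_forall fun x => ?_)
  have hx : VectorFourier.fourierIntegral Real.fourierChar μ (innerₗ ℝ).flip
      (fun _ => (1 : ℂ)) x = ∫ ξ, Complex.exp (Complex.I * (-(2 * π * x)) * ξ) ∂μ := by
    rw [flip_innerₗ]
    simp only [VectorFourier.fourierIntegral]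
    refine integral_congr_ae (Filter.Eventually.of_forall fun ξ => ?_)
    simp only [innerₗ_apply_apply, RCLike.inner_apply, conj_trivial, Circle.smul_def,
      Real.fourierChar_apply, smul_eq_mul, mul_one]
    congr 1
    push_cast
    ring
  simp only [hx]

noncomputable def bumpF (a : ℝ) (n : ℕ) : ContDiffBump (a - ((n : ℝ) + 1 + |a|)) where
  rIn := (n : ℝ) + 1 + |a|
  rOut := (n : ℝ) + 1 + |a| + ((n : ℝ) + 1)⁻¹
  rIn_pos := by positivity
  rIn_lt_rOut := by
    have : (0 : ℝ) < ((n : ℝ) + 1)⁻¹ := by positivity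
    linarith

@[simp] lemma bumpF_rIn (a : ℝ) (n : ℕ) : (bumpF a n).rIn = (n : ℝ) + 1 + |a| := rfl
@[simp] lemma bumpF_rOut (a : ℝ) (n : ℕ) :
    (bumpF a n).rOut = (n : ℝ) + 1 + |a| + ((n : ℝ) + 1)⁻¹ := rfl

lemma bumpF_one {a x : ℝ} {n : ℕ} (h1 : x ≤ a) (h2 : a - 2 * ((n : ℝ) + 1 + |a|) ≤ x) :
    bumpF a n x = 1 := by
  apply ContDiffBump.one_of_mem_closedBall
  rw [Metric.mem_closedBall, Real.dist_eq, bumpF_rIn, abs_le]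
  constructor <;> linarith

lemma bumpF_zero {a x : ℝ} {n : ℕ} (h : a + ((n : ℝ) + 1)⁻¹ ≤ x) :
    bumpF a n x = 0 := by
  apply ContDiffBump.zero_of_le_dist
  rw [Real.dist_eq, bumpF_rOut]
  have h2 : ((n : ℝ) + 1 + |a| + ((n : ℝ) + 1)⁻¹) ≤ x - (a - ((n : ℝ) + 1 + |a|)) := by linarith
  exact h2.trans (le_abs_self _)

lemma bumpF_tendsto (a x : ℝ) :
    Filter.Tendsto (fun n : ℕ => bumpF a n x) Filter.atTop
      (nhds (Set.indicator (Set.Iic a) (fun _ => (1 : ℝ)) x)) := by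
  have hR : Filter.Tendsto (fun n : ℕ => (n : ℝ) + 1 + |a|) Filter.atTop Filter.atTop :=
    Filter.tendsto_atTop_add_const_right _ _
      (Filter.tendsto_atTop_add_const_right _ _ tendsto_natCast_atTop_atTop)
  rcases le_or_gt x a with hx | hx
  · have hev : ∀ᶠ n : ℕ in Filter.atTop, bumpF a n x = 1 := by
      filter_upwards [hR.eventually_ge_atTop ((a - x) / 2)] with n hn
      exact bumpF_one hx (by linarith)
    have hi : (Set.Iic a).indicator (fun _ => (1:ℝ)) x = 1 :=
      Set.indicator_of_mem (Set.mem_Iic.mpr hx) _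
    rw [hi]
    exact Filter.Tendsto.congr' (hev.mono fun n hn => hn.symm) tendsto_const_nhds
  · have hlim : Filter.Tendsto (fun n : ℕ => ((n : ℝ) + 1)⁻¹) Filter.atTop (nhds 0) :=
      Filter.Tendsto.inv_tendsto_atTop
        (Filter.tendsto_atTop_add_const_right _ _ tendsto_natCast_atTop_atTop)
    have hev : ∀ᶠ n : ℕ in Filter.atTop, bumpF a n x = 0 := by
      filter_upwards [hlim.eventually_lt_const (by linarith : (0:ℝ) < x - a)] with n hn
      exact bumpF_zero (by linarith)
    have hi : (Set.Iic a).indicator (fun _ => (1:ℝ)) x = 0 :=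
      Set.indicator_of_notMem (by simpa using hx) _
    rw [hi]
    exact Filter.Tendsto.congr' (hev.mono fun n hn => hn.symm) tendsto_const_nhds

lemma ext_of_char (μ ν : Measure ℝ) [IsProbabilityMeasure μ] [IsProbabilityMeasure ν]
    (h : ∀ ζ : ℝ, ∫ x, Complex.exp (Complex.I * ζ * x) ∂μ
      = ∫ x, Complex.exp (Complex.I * ζ * x) ∂ν) : μ = ν := by
  have hSch : ∀ g : SchwartzMap ℝ ℂ, ∫ x, g x ∂μ = ∫ x, g x ∂ν := by
    intro g
    have hfg : 𝓕 ⇑((FourierTransform.fourierCLE ℂ (SchwartzMap ℝ ℂ)).symm g) = ⇑g := by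
      conv_rhs => rw [← (FourierTransform.fourierCLE ℂ (SchwartzMap ℝ ℂ)).apply_symm_apply g]
      rfl
    have hint : Integrable (⇑((FourierTransform.fourierCLE ℂ (SchwartzMap ℝ ℂ)).symm g)) volume :=
      ((FourierTransform.fourierCLE ℂ (SchwartzMap ℝ ℂ)).symm g).integrable
    calc ∫ x, g x ∂μ = ∫ ξ, 𝓕 ⇑((FourierTransform.fourierCLE ℂ (SchwartzMap ℝ ℂ)).symm g) ξ ∂μ := by rw [hfg]
      _ = ∫ x, ((FourierTransform.fourierCLE ℂ (SchwartzMap ℝ ℂ)).symm g) x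
            * (∫ ξ, Complex.exp (Complex.I * (-(2 * π * x)) * ξ) ∂μ) :=
          key_parseval μ _ hint
      _ = ∫ x, ((FourierTransform.fourierCLE ℂ (SchwartzMap ℝ ℂ)).symm g) x
            * (∫ ξ, Complex.exp (Complex.I * (-(2 * π * x)) * ξ) ∂ν) := by
          refine integral_congr_ae (Filter.Eventually.of_forall fun x => ?_)
          have hx := h (-(2 * π * x))
          push_cast at hx
          simp only [hx]
      _ = ∫ ξ, 𝓕 ⇑((FourierTransform.fourierCLE ℂ (SchwartzMap ℝ ℂ)).symm g) ξ ∂ν :=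
          (key_parseval ν _ hint).symm
      _ = ∫ x, g x ∂ν := by rw [hfg]
  refine MeasureTheory.Measure.ext_of_Iic μ ν fun a => ?_
  have hreal : ∀ n : ℕ, ∫ x, (bumpF a n) x ∂μ = ∫ x, (bumpF a n) x ∂ν := by
    intro n
    have hb : ContDiff ℝ ((⊤ : ℕ∞)) (⇑(bumpF a n) : ℝ → ℝ) := (bumpF a n).contDiff
    have hsm : ContDiff ℝ ((⊤ : ℕ∞)) fun x : ℝ => ((bumpF a n x : ℝ) : ℂ) :=
      Complex.ofRealCLM.contDiff.comp hb
    have hcs : HasCompactSupport fun x : ℝ => ((bumpF a n x : ℝ) : ℂ) :=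
      (bumpF a n).hasCompactSupport.comp_left Complex.ofReal_zero
    have hcont : Continuous fun x : ℝ => ((bumpF a n x : ℝ) : ℂ) :=
      Complex.continuous_ofReal.comp (bumpF a n).continuous
    have hbd : ∀ (m : Measure ℝ), IsProbabilityMeasure m →
        Integrable (fun x : ℝ => ((bumpF a n x : ℝ) : ℂ)) m := by
      intro m hm
      refine (integrable_const (1:ℝ)).mono' hcont.aestronglyMeasurable ?_
      refine Filter.Eventually.of_forall fun x => ?_
      rw [Complex.norm_real, Real.norm_eq_abs, abs_of_nonneg (bumpF a n).nonneg]
      exact (bumpF a n).le_one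
    have h2 := hSch (mySchwartz _ hsm hcs)
    simp only [mySchwartz_apply] at h2
    have h3 := congrArg (RCLike.re (K := ℂ)) h2
    rw [← integral_re (hbd μ inferInstance), ← integral_re (hbd ν inferInstance)] at h3
    simpa using h3
  have hmain : ∀ (m : Measure ℝ), IsProbabilityMeasure m →
      Filter.Tendsto (fun n : ℕ => ∫ x, (bumpF a n) x ∂m) Filter.atTop
        (nhds ((m (Set.Iic a)).toReal)) := by
    intro m hm
    have hdc := MeasureTheory.tendsto_integral_of_dominated_convergence
      (F := fun n : ℕ => fun x : ℝ => (bumpF a n) x)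
      (f := Set.indicator (Set.Iic a) (fun _ => (1 : ℝ))) (bound := fun _ => (1 : ℝ))
      (μ := m)
      (fun n => ((bumpF a n).continuous).aestronglyMeasurable)
      (integrable_const 1)
      (fun n => Filter.Eventually.of_forall fun x => by
        rw [Real.norm_eq_abs, abs_of_nonneg (bumpF a n).nonneg]
        exact (bumpF a n).le_one)
      (Filter.Eventually.of_forall fun x => bumpF_tendsto a x)
    have hi : ∫ x, Set.indicator (Set.Iic a) (fun _ => (1:ℝ)) x ∂m = (m (Set.Iic a)).toReal := by
      rw [show (Set.indicator (Set.Iic a) (fun _ => (1:ℝ))) = Set.indicator (Set.Iic a) 1 from rfl]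
      exact MeasureTheory.integral_indicator_one measurableSet_Iic
    rwa [hi] at hdc
  have h1 := hmain μ inferInstance
  have h2 := hmain ν inferInstance
  have h3 : (μ (Set.Iic a)).toReal = (ν (Set.Iic a)).toReal :=
    tendsto_nhds_unique (h1.congr fun n => hreal n) h2
  exact (ENNReal.toReal_eq_toReal_iff' (measure_ne_top μ _) (measure_ne_top ν _)).mp h3

end AuxChar


/-- For an infinitely divisible law `π` on `ℝ` with cumulant function `C`
(`exp(C(ζ)) = ∫ exp(iζx) dπ(x)`), a trawl `A` with `Leb(A) = 1` and a homogeneous Lévy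
basis `L` with seed law `π` (i.e. `E[exp(iζL(B))] = exp(Leb(B)·C(ζ))`) yield a
stationary trawl process `Y_t = L(A_t)` with one-dimensional marginal law `π` for
every `t`. -/
theorem stmt_9 {Ω : Type*} [MeasurableSpace Ω] (P : Measure Ω) [IsProbabilityMeasure P]
    (d : ℕ) (π : Measure ℝ) [IsProbabilityMeasure π] (C : ℝ → ℂ)
    (hC : ∀ ζ : ℝ, Complex.exp (C ζ) = ∫ x, Complex.exp (Complex.I * ζ * x) ∂π)
    (L : Set ((Fin d → ℝ) × ℝ) → Ω → ℝ)
    (hLmeas : ∀ B : Set ((Fin d → ℝ) × ℝ), Measurable (L B))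
    (hL : ∀ B : Set ((Fin d → ℝ) × ℝ), MeasurableSet B → volume B < ⊤ → ∀ ζ : ℝ,
      ∫ ω, Complex.exp (Complex.I * ζ * (L B ω)) ∂P
        = Complex.exp (((volume B).toReal : ℂ) * C ζ))
    (A : Set ((Fin d → ℝ) × ℝ)) (hA : MeasurableSet A) (hA1 : volume A = 1) (t : ℝ) :
    P.map (L ((fun p : (Fin d → ℝ) × ℝ => (p.1, p.2 + t)) '' A)) = π := by
  set B : Set ((Fin d → ℝ) × ℝ) := (fun p : (Fin d → ℝ) × ℝ => (p.1, p.2 + t)) '' A with hB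
  -- the shift as a measurable equiv
  let e : ((Fin d → ℝ) × ℝ) ≃ᵐ ((Fin d → ℝ) × ℝ) :=
    (MeasurableEquiv.refl (Fin d → ℝ)).prodCongr (MeasurableEquiv.addRight t)
  have hes : (⇑e.symm : ((Fin d → ℝ) × ℝ) → ((Fin d → ℝ) × ℝ))
      = fun p => (p.1, p.2 - t) := by
    funext p
    simp [e, MeasurableEquiv.prodCongr, MeasurableEquiv.addRight, sub_eq_add_neg, Prod.map]
  have heB : B = ⇑e.symm ⁻¹' A := by
    rw [hB, hes]
    ext p
    constructor
    · rintro ⟨q, hq, rfl⟩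
      simpa using hq
    · intro hp
      exact ⟨(p.1, p.2 - t), hp, by simp⟩
  have hmp : MeasurePreserving (⇑e.symm) (volume : Measure ((Fin d → ℝ) × ℝ)) volume := by
    have h1 : MeasurePreserving (fun p : (Fin d → ℝ) × ℝ => (p.1, p.2 - t))
        ((volume : Measure (Fin d → ℝ)).prod (volume : Measure ℝ))
        ((volume : Measure (Fin d → ℝ)).prod (volume : Measure ℝ)) :=
      (MeasurePreserving.id _).prod (measurePreserving_sub_right volume t)
    have hveq : (volume : Measure ((Fin d → ℝ) × ℝ))
        = (volume : Measure (Fin d → ℝ)).prod (volume : Measure ℝ) := rfl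
    rw [hes, hveq]
    exact h1
  have hBmeas : MeasurableSet B := by
    rw [heB]; exact e.symm.measurable hA
  have hBvol : volume B = 1 := by
    rw [heB, hmp.measure_preimage hA.nullMeasurableSet, hA1]
  have hμ : IsProbabilityMeasure (P.map (L B)) :=
    Measure.isProbabilityMeasure_map (hLmeas B).aemeasurable
  refine ext_of_char _ _ fun ζ => ?_
  have hchar : ∫ x, Complex.exp (Complex.I * ζ * x) ∂(P.map (L B))
      = ∫ ω, Complex.exp (Complex.I * ζ * (L B ω)) ∂P := by
    rw [integral_map (hLmeas B).aemeasurable]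
    exact (Complex.continuous_exp.comp (by fun_prop)).aestronglyMeasurable
  rw [hchar, hL B hBmeas (by rw [hBvol]; exact ENNReal.one_lt_top) ζ, hBvol]
  simp [hC ζ]
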